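/- (Abstract Hurewicz Theorem.) Let M : C ⇄ D : U be an adjunction (M left adjoint to U) of triangulated functors between t-categories, with M right-t-exact and U left-t-exact. Then for every E ∈ C_{≥0} there is a natural isomorphism π₀^D(M E) ≅ M^♥(π₀^C E) in the heart D^♥. -/

import Mathlib

/-!
STATEMENT 3 (Abstract Hurewicz Theorem): Let M : C ⇄ D : U be an adjunction
of triangulated functors between t-categories, with M right-t-exact and U
left-t-exact.  Then for every E ∈ C_{≥0} there is a natural isomorphism
π₀^D(M E) ≅ M^♥(π₀^C E) in the heart D^♥.
-/

open CategoryTheory Category Limits Pretriangulated Triangulated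

namespace TPaper

variable (C : Type*) [Category C] [Preadditive C] [HasZeroObject C] [HasShift C ℤ]
  [∀ n : ℤ, (shiftFunctor C n).Additive] [Pretriangulated C]

/-- A t-category structure: a t-structure (in homological notation, so that
`LE n` is the predicate of being `≤ n`, i.e. in `C_{≤ n}`, and `GE n` that of
being `≥ n`) together with chosen truncation functors.  `truncLE n` is the
left adjoint of the inclusion `C_{≤ n} ↪ C` and `truncGE n` is the right
adjoint of the inclusion `C_{≥ n} ↪ C`; the adjunction properties are
expressed by the universal properties `truncLE_uni`, `truncGE_uni`. -/
structure TCat where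
  /-- the underlying t-structure -/
  t : TStructure C
  /-- truncation `E ↦ E_{≤ n}` -/
  truncLE : ℤ → C ⥤ C
  /-- truncation `E ↦ E_{≥ n}` -/
  truncGE : ℤ → C ⥤ C
  /-- the unit `E → E_{≤ n}` of the reflection onto `C_{≤ n}` -/
  truncLEπ (n : ℤ) : 𝟭 C ⟶ truncLE n
  /-- the counit `E_{≥ n} → E` of the coreflection onto `C_{≥ n}` -/
  truncGEι (n : ℤ) : truncGE n ⟶ 𝟭 C
  le_truncLE (n : ℤ) (X : C) : t.le n ((truncLE n).obj X)
  ge_truncGE (n : ℤ) (X : C) : t.ge n ((truncGE n).obj X)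
  /-- `truncLE n` is left adjoint to the inclusion of `C_{≤ n}` -/
  truncLE_uni {n : ℤ} {X Y : C} (hY : t.le n Y) (f : X ⟶ Y) :
    ∃! g : (truncLE n).obj X ⟶ Y, (truncLEπ n).app X ≫ g = f
  /-- `truncGE n` is right adjoint to the inclusion of `C_{≥ n}` -/
  truncGE_uni {n : ℤ} {X Y : C} (hX : t.ge n X) (f : X ⟶ Y) :
    ∃! g : X ⟶ (truncGE n).obj Y, g ≫ (truncGEι n).app Y = f
  /-- `(E_{≤ 0})_{≥ 0}` is again `≤ 0`, so that `π₀(E) = (E_{≤0})_{≥0}` lies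
  in the heart -/
  le_pi0 (X : C) : t.le 0 ((truncGE 0).obj ((truncLE 0).obj X))

variable {C}

namespace TCat

variable (tC : TCat C)

/-- The heart `C^♥ = C_{≤ 0} ∩ C_{≥ 0}` of a t-category. -/
abbrev Heart : Type _ := ObjectProperty.FullSubcategory (fun X => tC.t.le 0 X ∧ tC.t.ge 0 X)

/-- The inclusion of the heart. -/
abbrev heartι : tC.Heart ⥤ C := ObjectProperty.ι _

/-- The functor `π₀ : C → C^♥`, `E ↦ (E_{≤ 0})_{≥ 0}`. -/
def pi0 : C ⥤ tC.Heart :=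
  ObjectProperty.lift _ (tC.truncLE 0 ⋙ tC.truncGE 0)
    (fun X => ⟨tC.le_pi0 X, tC.ge_truncGE 0 _⟩)

end TCat

variable {D : Type*} [Category D] [Preadditive D] [HasZeroObject D] [HasShift D ℤ]
  [∀ n : ℤ, (shiftFunctor D n).Additive] [Pretriangulated D]

/-- A functor `F : C → D` between t-categories is right-t-exact if
`F(C_{≥ 0}) ⊆ D_{≥ 0}`. -/
def RightTExact (tC : TCat C) (tD : TCat D) (F : C ⥤ D) : Prop :=
  ∀ X : C, tC.t.ge 0 X → tD.t.ge 0 (F.obj X)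

/-- A functor `F : C → D` between t-categories is left-t-exact if
`F(C_{≤ 0}) ⊆ D_{≤ 0}`. -/
def LeftTExact (tC : TCat C) (tD : TCat D) (F : C ⥤ D) : Prop :=
  ∀ X : C, tC.t.le 0 X → tD.t.le 0 (F.obj X)

/-- The functor `F^♥ : C^♥ → D^♥`, `E ↦ π₀^D(F E)`, induced on hearts by a
functor `F : C → D` between t-categories. -/
def heartFunctor (tC : TCat C) (tD : TCat D) (F : C ⥤ D) : tC.Heart ⥤ tD.Heart :=
  tC.heartι ⋙ F ⋙ tD.pi0

namespace TCat

/-- Uniqueness part of the coreflection universal property. -/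
lemma ge_hom_ext (tC : TCat C) {n : ℤ} {X Y : C} (hX : tC.t.ge n X)
    {g g' : X ⟶ (tC.truncGE n).obj Y}
    (h : g ≫ (tC.truncGEι n).app Y = g' ≫ (tC.truncGEι n).app Y) : g = g' := by
  obtain ⟨g₀, -, hu⟩ := tC.truncGE_uni hX (g' ≫ (tC.truncGEι n).app Y)
  rw [hu g h, hu g' rfl]

/-- Uniqueness part of the reflection universal property. -/
lemma le_hom_ext (tC : TCat C) {n : ℤ} {X Y : C} (hY : tC.t.le n Y)
    {g g' : (tC.truncLE n).obj X ⟶ Y}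
    (h : (tC.truncLEπ n).app X ≫ g = (tC.truncLEπ n).app X ≫ g') : g = g' := by
  obtain ⟨g₀, -, hu⟩ := tC.truncLE_uni hY ((tC.truncLEπ n).app X ≫ g')
  rw [hu g h, hu g' rfl]

/-- The factorization of a map to an `LE n` object through the reflection. -/
noncomputable def lelift (tC : TCat C) {n : ℤ} {X Y : C} (hY : tC.t.le n Y) (f : X ⟶ Y) :
    (tC.truncLE n).obj X ⟶ Y :=
  (tC.truncLE_uni hY f).choose

lemma lelift_fac (tC : TCat C) {n : ℤ} {X Y : C} (hY : tC.t.le n Y) (f : X ⟶ Y) :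
    (tC.truncLEπ n).app X ≫ tC.lelift hY f = f :=
  (tC.truncLE_uni hY f).choose_spec.1

/-- The canonical map `X ⟶ (X_{≤0})_{≥0}` for `X ∈ C_{≥0}`, lifting the unit
`X ⟶ X_{≤0}` through the counit. -/
noncomputable def uMap (tC : TCat C) {X : C} (hX : tC.t.ge 0 X) :
    X ⟶ (tC.truncGE 0).obj ((tC.truncLE 0).obj X) :=
  (tC.truncGE_uni hX ((tC.truncLEπ 0).app X)).choose

lemma uMap_fac (tC : TCat C) {X : C} (hX : tC.t.ge 0 X) :
    tC.uMap hX ≫ (tC.truncGEι 0).app ((tC.truncLE 0).obj X) = (tC.truncLEπ 0).app X :=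
  (tC.truncGE_uni hX ((tC.truncLEπ 0).app X)).choose_spec.1

/-- For `X ∈ C_{≥0}` the counit `(X_{≤0})_{≥0} → X_{≤0}` is an isomorphism. -/
lemma isIso_GEι (tC : TCat C) {X : C} (hX : tC.t.ge 0 X) :
    IsIso ((tC.truncGEι 0).app ((tC.truncLE 0).obj X)) := by
  set s : (tC.truncLE 0).obj X ⟶ (tC.truncGE 0).obj ((tC.truncLE 0).obj X) :=
    tC.lelift (tC.le_pi0 X) (tC.uMap hX) with hs
  have hfac : (tC.truncLEπ 0).app X ≫ s = tC.uMap hX := tC.lelift_fac _ _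
  have h1 : s ≫ (tC.truncGEι 0).app ((tC.truncLE 0).obj X) = 𝟙 _ := by
    apply tC.le_hom_ext (tC.le_truncLE 0 X)
    rw [comp_id, ← assoc, hfac]
    exact tC.uMap_fac hX
  have h2 : (tC.truncGEι 0).app ((tC.truncLE 0).obj X) ≫ s = 𝟙 _ := by
    apply tC.ge_hom_ext (tC.ge_truncGE 0 _)
    rw [assoc, h1]
    simp
  exact ⟨s, h2, h1⟩

/-- Precomposition with the unit `X → X_{≤0}` is bijective on maps into an
`LE 0` object. -/
lemma leπ_precomp_bijective (tC : TCat C) (X : C) {V : C} (hV : tC.t.le 0 V) :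
    Function.Bijective (fun g : (tC.truncLE 0).obj X ⟶ V => (tC.truncLEπ 0).app X ≫ g) :=
  ⟨fun _ _ h => tC.le_hom_ext hV h, fun f => ⟨tC.lelift hV f, tC.lelift_fac hV f⟩⟩

/-- Precomposition with `uMap : X → (X_{≤0})_{≥0}` is bijective on maps into
an `LE 0` object, for `X ∈ C_{≥0}`. -/
lemma uMap_precomp_bijective (tC : TCat C) {X V : C} (hX : tC.t.ge 0 X) (hV : tC.t.le 0 V) :
    Function.Bijective
      (fun g : (tC.truncGE 0).obj ((tC.truncLE 0).obj X) ⟶ V => tC.uMap hX ≫ g) := by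
  haveI := tC.isIso_GEι hX
  have hu : tC.uMap hX
      = (tC.truncLEπ 0).app X ≫ inv ((tC.truncGEι 0).app ((tC.truncLE 0).obj X)) := by
    rw [← tC.uMap_fac hX, assoc, IsIso.hom_inv_id, comp_id]
  constructor
  · intro g g' h
    dsimp only at h
    rw [hu, assoc, assoc] at h
    have h' := tC.le_hom_ext hV h
    exact (cancel_epi (inv ((tC.truncGEι 0).app ((tC.truncLE 0).obj X)))).mp h'
  · intro f
    refine ⟨(tC.truncGEι 0).app ((tC.truncLE 0).obj X) ≫ tC.lelift hV f, ?_⟩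
    dsimp only
    rw [← assoc, tC.uMap_fac hX, tC.lelift_fac]

/-- Naturality of `uMap`. -/
lemma uMap_natural (tC : TCat C) {X Y : C} (hX : tC.t.ge 0 X) (hY : tC.t.ge 0 Y)
    (f : X ⟶ Y) :
    f ≫ tC.uMap hY = tC.uMap hX ≫ (tC.truncGE 0).map ((tC.truncLE 0).map f) := by
  apply tC.ge_hom_ext hX
  have hnatι := (tC.truncGEι 0).naturality ((tC.truncLE 0).map f)
  have hnatπ := (tC.truncLEπ 0).naturality f
  simp only [Functor.id_map] at hnatι hnatπ
  rw [assoc, tC.uMap_fac hY, assoc, hnatι, ← assoc, tC.uMap_fac hX, hnatπ]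

/-- A map between `LE 0` objects inducing bijections on maps into all `LE 0`
objects is an isomorphism. -/
lemma isIso_of_precomp_bijective (tC : TCat C) {A B : C} (hA : tC.t.le 0 A)
    (hB : tC.t.le 0 B) (α : A ⟶ B)
    (h : ∀ W : C, tC.t.le 0 W → Function.Bijective (fun g : B ⟶ W => α ≫ g)) :
    IsIso α := by
  obtain ⟨β, hβ⟩ := (h A hA).2 (𝟙 A)
  dsimp only at hβ
  refine ⟨β, hβ, (h B hB).1 ?_⟩
  dsimp only
  rw [← assoc, hβ, id_comp, comp_id]

end TCat

/-- Abstract Hurewicz: for `E ∈ C_{≥ 0}` one has `π₀^D(M E) ≅ M^♥(π₀^C E)`,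
naturally in `E` (naturality being expressed by an isomorphism of functors on
the full subcategory `C_{≥ 0}` of `C`). -/
theorem abstract_hurewicz (tC : TCat C) (tD : TCat D)
    (M : C ⥤ D) (U : D ⥤ C) [M.CommShift ℤ] [M.IsTriangulated]
    [U.CommShift ℤ] [U.IsTriangulated] (adj : M ⊣ U)
    (hM : RightTExact tC tD M) (hU : LeftTExact tD tC U) :
    Nonempty ((ObjectProperty.ι (tC.t.ge 0) ⋙ M ⋙ tD.pi0) ≅
      (ObjectProperty.ι (tC.t.ge 0) ⋙ tC.pi0 ⋙ heartFunctor tC tD M)) := by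
  -- the natural transformation, with components `π₀^D (M (uMap E))`
  let η : (ObjectProperty.ι (tC.t.ge 0) ⋙ M ⋙ tD.pi0) ⟶
      (ObjectProperty.ι (tC.t.ge 0) ⋙ tC.pi0 ⋙ heartFunctor tC tD M) :=
    { app := fun E => tD.pi0.map (M.map (tC.uMap E.property))
      naturality := by
        intro E E' f
        show tD.pi0.map (M.map f.hom) ≫ tD.pi0.map (M.map (tC.uMap E'.property)) =
          tD.pi0.map (M.map (tC.uMap E.property)) ≫
            tD.pi0.map (M.map ((tC.truncGE 0).map ((tC.truncLE 0).map f.hom)))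
        rw [← tD.pi0.map_comp, ← tD.pi0.map_comp, ← M.map_comp, ← M.map_comp,
          tC.uMap_natural E.property E'.property f.hom] }
  -- each component is an isomorphism
  haveI : ∀ E : ObjectProperty.FullSubcategory (tC.t.ge 0), IsIso (η.app E) := by
    intro E
    set X := E.obj with hXdef
    have hX : tC.t.ge 0 X := E.property
    set P : C := (tC.truncGE 0).obj ((tC.truncLE 0).obj X) with hPdef
    have hP : tC.t.ge 0 P := tC.ge_truncGE 0 _
    set w : M.obj X ⟶ M.obj P := M.map (tC.uMap hX) with hwdef
    -- precomposition with `w` is bijective on maps into `LE 0` objects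
    have hb : ∀ W : D, tD.t.le 0 W →
        Function.Bijective (fun g : M.obj P ⟶ W => w ≫ g) := by
      intro W hW
      have heq : (fun g : M.obj P ⟶ W => w ≫ g)
          = (adj.homEquiv X W).symm ∘
            ((fun h : P ⟶ U.obj W => tC.uMap hX ≫ h) ∘ (adj.homEquiv P W)) := by
        funext g
        dsimp only [Function.comp]
        rw [← Adjunction.homEquiv_naturality_left, Equiv.symm_apply_apply]
      rw [heq]
      exact (adj.homEquiv X W).symm.bijective.comp
        ((tC.uMap_precomp_bijective hX (hU W hW)).comp (adj.homEquiv P W).bijective)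
    -- hence precomposition with `(truncLE 0).map w` is bijective as well
    set α : (tD.truncLE 0).obj (M.obj X) ⟶ (tD.truncLE 0).obj (M.obj P) :=
      (tD.truncLE 0).map w with hαdef
    have hα : ∀ W : D, tD.t.le 0 W →
        Function.Bijective (fun g : (tD.truncLE 0).obj (M.obj P) ⟶ W => α ≫ g) := by
      intro W hW
      have h1 := tD.leπ_precomp_bijective (M.obj X) hW
      have h2 := tD.leπ_precomp_bijective (M.obj P) hW
      have hcomp : ((fun g : (tD.truncLE 0).obj (M.obj X) ⟶ W =>
            (tD.truncLEπ 0).app (M.obj X) ≫ g) ∘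
          (fun g : (tD.truncLE 0).obj (M.obj P) ⟶ W => α ≫ g))
          = (fun g : M.obj P ⟶ W => w ≫ g) ∘
            (fun g : (tD.truncLE 0).obj (M.obj P) ⟶ W =>
              (tD.truncLEπ 0).app (M.obj P) ≫ g) := by
        funext g
        dsimp only [Function.comp]
        have hnat := (tD.truncLEπ 0).naturality w
        simp only [Functor.id_map] at hnat
        rw [← assoc, ← hnat, assoc]
      have : Function.Bijective ((fun g : (tD.truncLE 0).obj (M.obj X) ⟶ W =>
            (tD.truncLEπ 0).app (M.obj X) ≫ g) ∘
          (fun g : (tD.truncLE 0).obj (M.obj P) ⟶ W => α ≫ g)) := by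
        rw [hcomp]
        exact (hb W hW).comp h2
      exact (Function.Bijective.of_comp_iff' h1 _).mp this
    haveI hiso_α : IsIso α :=
      tD.isIso_of_precomp_bijective (tD.le_truncLE 0 _) (tD.le_truncLE 0 _) α hα
    -- transport across the (iso) counit square to the `π₀`-level map
    haveI h4 : IsIso ((tD.truncGEι 0).app ((tD.truncLE 0).obj (M.obj X))) :=
      tD.isIso_GEι (hM X hX)
    haveI h5 : IsIso ((tD.truncGEι 0).app ((tD.truncLE 0).obj (M.obj P))) :=
      tD.isIso_GEι (hM P hP)
    have hsq : (tD.truncGE 0).map α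
        = (tD.truncGEι 0).app ((tD.truncLE 0).obj (M.obj X)) ≫ α ≫
          inv ((tD.truncGEι 0).app ((tD.truncLE 0).obj (M.obj P))) := by
      have hnat := (tD.truncGEι 0).naturality α
      simp only [Functor.id_map] at hnat
      rw [← assoc, ← hnat, assoc, IsIso.hom_inv_id, comp_id]
    haveI hGE : IsIso ((tD.truncGE 0).map α) := by
      rw [hsq]; infer_instance
    -- reflect the isomorphism along the (fully faithful) heart inclusion
    have : IsIso (tD.heartι.map (η.app E)) := hGE
    exact isIso_of_reflects_iso (η.app E) tD.heartι
  haveI : IsIso η := NatIso.isIso_of_isIso_app η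
  exact ⟨asIso η⟩

end TPaper
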